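/- Let K_{γ} for γ ∈ ℤ² denote the field automorphism of ℂ(x,y) determined by K_{γ}(X_{δ}) = X_{δ}·(1 + X_{γ})^{⟨δ,γ⟩} for all δ ∈ ℤ², where X_{(a,b)} = x^a y^b and ⟨(a,b),(c,d)⟩ = ad − bc. Then with γ₁ = (1,0) and γ₂ = (0,1) one has the pentagon identity K_{γ₂} ∘ K_{γ₁} = K_{γ₁} ∘ K_{γ₁+γ₂} ∘ K_{γ₂}, where (f ∘ g)(h) = f(g(h)). -/

import Mathlib

/-- The field `ℂ(x,y)` of rational functions in two variables. -/
abbrev F0 : Type := FractionRing (MvPolynomial (Fin 2) ℂ)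

/-- The Laurent monomial `X_{(a,b)} = x^a y^b` in `ℂ(x,y)`. -/
noncomputable def Xmon (γ : ℤ × ℤ) : F0 :=
  (algebraMap (MvPolynomial (Fin 2) ℂ) F0 (MvPolynomial.X 0)) ^ γ.1 *
    (algebraMap (MvPolynomial (Fin 2) ℂ) F0 (MvPolynomial.X 1)) ^ γ.2

/-- The standard skew-symmetric pairing `⟨(a,b),(c,d)⟩ = ad - bc` on `ℤ²`. -/
def skewPair (γ δ : ℤ × ℤ) : ℤ := γ.1 * δ.2 - γ.2 * δ.1

noncomputable abbrev Fi : MvPolynomial (Fin 2) ℂ →+* F0 :=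
  algebraMap (MvPolynomial (Fin 2) ℂ) F0

lemma Fi_ne_zero (p : MvPolynomial (Fin 2) ℂ) (h : MvPolynomial.eval 0 p ≠ 0) :
    Fi p ≠ 0 := by
  intro hp
  apply h
  have hinj := IsFractionRing.injective (MvPolynomial (Fin 2) ℂ) F0
  have : p = 0 := hinj (by simpa using hp)
  simp [this]

lemma F0.algEquiv_ext (e₁ e₂ : F0 ≃ₐ[ℂ] F0)
    (h0 : e₁ (Fi (MvPolynomial.X 0)) = e₂ (Fi (MvPolynomial.X 0)))
    (h1 : e₁ (Fi (MvPolynomial.X 1)) = e₂ (Fi (MvPolynomial.X 1))) : e₁ = e₂ := by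
  have key : ((e₁ : F0 →+* F0).comp Fi) = ((e₂ : F0 →+* F0).comp Fi) := by
    apply MvPolynomial.ringHom_ext
    · intro a
      have : Fi (MvPolynomial.C a) = algebraMap ℂ F0 a := by
        rw [IsScalarTower.algebraMap_apply ℂ (MvPolynomial (Fin 2) ℂ) F0]
        rfl
      simp [this]
    · intro j
      fin_cases j
      · simpa using h0
      · simpa using h1
  have : (e₁ : F0 →+* F0) = (e₂ : F0 →+* F0) :=
    IsLocalization.ringHom_ext (nonZeroDivisors (MvPolynomial (Fin 2) ℂ)) key
  exact AlgEquiv.ext fun f => RingHom.congr_fun this f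

set_option maxHeartbeats 1000000 in
set_option synthInstance.maxHeartbeats 100000 in
theorem pentagon_identity
    (K : ℤ × ℤ → (F0 ≃ₐ[ℂ] F0))
    (hK : ∀ γ δ : ℤ × ℤ, K γ (Xmon δ) = Xmon δ * (1 + Xmon γ) ^ skewPair δ γ) :
    (K (1, 0)).trans (K (0, 1)) = ((K (0, 1)).trans (K (1, 1))).trans (K (1, 0)) := by
  set x : F0 := Fi (MvPolynomial.X 0) with hxdef
  set y : F0 := Fi (MvPolynomial.X 1) with hydef
  have hX10 : Xmon (1, 0) = x := by simp only [Xmon, zpow_one, zpow_zero, mul_one]; rfl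
  have hX01 : Xmon (0, 1) = y := by simp only [Xmon, zpow_one, zpow_zero, one_mul]; rfl
  have hX11 : Xmon (1, 1) = x * y := by simp only [Xmon, zpow_one]; rfl
  -- nonvanishing facts
  have h1x : (1 : F0) + x ≠ 0 := by
    have : (1 : F0) + x = Fi (1 + MvPolynomial.X 0) := by rw [map_add, map_one]
    rw [this]; exact Fi_ne_zero _ (by simp)
  have h1y : (1 : F0) + y ≠ 0 := by
    have : (1 : F0) + y = Fi (1 + MvPolynomial.X 1) := by rw [map_add, map_one]
    rw [this]; exact Fi_ne_zero _ (by simp)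
  have h1xy : (1 : F0) + x * y ≠ 0 := by
    have : (1 : F0) + x * y = Fi (1 + MvPolynomial.X 0 * MvPolynomial.X 1) := by rw [map_add, map_one, map_mul, ← hxdef, ← hydef]
    rw [this]; exact Fi_ne_zero _ (by simp)
  have h1xxy : (1 : F0) + x + x * y ≠ 0 := by
    have : (1 : F0) + x + x * y
        = Fi (1 + MvPolynomial.X 0 + MvPolynomial.X 0 * MvPolynomial.X 1) := by rw [map_add, map_add, map_one, map_mul, ← hxdef, ← hydef]
    rw [this]; exact Fi_ne_zero _ (by simp)
  -- values of the automorphisms on x and y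
  have ax : K (1, 0) x = x := by
    have := hK (1, 0) (1, 0); rw [hX10] at this; simpa [skewPair] using this
  have ay : K (1, 0) y = y * (1 + x)⁻¹ := by
    have := hK (1, 0) (0, 1); rw [hX10, hX01] at this
    simpa [skewPair, zpow_neg, zpow_one] using this
  have bx : K (0, 1) x = x * (1 + y) := by
    have := hK (0, 1) (1, 0); rw [hX10, hX01] at this
    simpa [skewPair] using this
  have by' : K (0, 1) y = y := by
    have := hK (0, 1) (0, 1); rw [hX01] at this; simpa [skewPair] using this
  have cx : K (1, 1) x = x * (1 + x * y) := by
    have := hK (1, 1) (1, 0); rw [hX10, hX11] at this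
    simpa [skewPair] using this
  have cy : K (1, 1) y = y * (1 + x * y)⁻¹ := by
    have := hK (1, 1) (0, 1); rw [hX01, hX11] at this
    simpa [skewPair, zpow_neg, zpow_one] using this
  apply F0.algEquiv_ext
  · -- value on x
    rw [← hxdef]
    show K (0, 1) (K (1, 0) x) = K (1, 0) (K (1, 1) (K (0, 1) x))
    simp only [map_mul, map_add, map_one, map_inv₀, ax, ay, bx, by', cx, cy]
    field_simp
    ring
  · -- value on y
    rw [← hydef]
    show K (0, 1) (K (1, 0) y) = K (1, 0) (K (1, 1) (K (0, 1) y))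
    have h' : (1 : F0) + y * x + x ≠ 0 := fun h => h1xxy (by linear_combination h)
    simp only [map_mul, map_add, map_one, map_inv₀, ax, ay, bx, by', cx, cy]
    field_simp [h']
    rw [show (1 : F0) + x * (1 + y) = 1 + x + y * x by ring]
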